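/- Let G be a real polynomial with only real zeros and deg G ≥ n, let a₁, …, aₙ > 0 and A > 0. Define Pₙ(s; x₁, …, xₙ) = Σ_{S ⊆ {1,…,n}} G(s - Σ_{k ∉ S} i aₖ + Σ_{ℓ ∈ S} i a_ℓ) · Π_{ℓ ∈ S} x_ℓ. If Pₙ(iA; x₁, …, xₙ) = 0 and |x₁| ≥ 1, …, |x_{n-1}| ≥ 1, then |xₙ| < 1. -/

import Mathlib

open Complex Polynomial Finset

private lemma multiset_prod_map_le {f g : ℂ → ℝ} :
    ∀ M : Multiset ℂ, (∀ ρ ∈ M, 0 ≤ f ρ ∧ f ρ < g ρ) →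
      (M.map f).prod ≤ (M.map g).prod := by
  intro M
  induction M using Multiset.induction_on with
  | empty => simp
  | cons ρ M ih =>
    intro h
    simp only [Multiset.map_cons, Multiset.prod_cons]
    have h0 := h ρ (Multiset.mem_cons_self _ _)
    have hM : ∀ x ∈ M, 0 ≤ f x ∧ f x < g x := fun x hx => h x (Multiset.mem_cons_of_mem hx)
    have hfn : 0 ≤ (M.map f).prod := Multiset.prod_nonneg (by
      intro r hr; obtain ⟨y, hy, rfl⟩ := Multiset.mem_map.1 hr; exact (hM y hy).1)
    exact mul_le_mul (le_of_lt h0.2) (ih hM) hfn (le_trans h0.1 (le_of_lt h0.2))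

private lemma multiset_prod_map_lt {f g : ℂ → ℝ} (M : Multiset ℂ) (hM : M ≠ 0)
    (h : ∀ ρ ∈ M, 0 ≤ f ρ ∧ f ρ < g ρ) :
    (M.map f).prod < (M.map g).prod := by
  obtain ⟨ρ, hρ⟩ := Multiset.exists_mem_of_ne_zero hM
  obtain ⟨M', rfl⟩ := Multiset.exists_cons_of_mem hρ
  simp only [Multiset.map_cons, Multiset.prod_cons]
  have h0 := h ρ (Multiset.mem_cons_self _ _)
  have hM' : ∀ x ∈ M', 0 ≤ f x ∧ f x < g x := fun x hx => h x (Multiset.mem_cons_of_mem hx)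
  have hgp : 0 < (M'.map g).prod := Multiset.prod_pos (by
    intro r hr; obtain ⟨y, hy, rfl⟩ := Multiset.mem_map.1 hr
    exact lt_of_le_of_lt (hM' y hy).1 (hM' y hy).2)
  calc f ρ * (M'.map f).prod ≤ f ρ * (M'.map g).prod :=
        mul_le_mul_of_nonneg_left (multiset_prod_map_le M' hM') h0.1
    _ < g ρ * (M'.map g).prod := mul_lt_mul_of_pos_right h0.2 hgp

/-- Per-root comparison. -/
private lemma factor_lt {s ρ : ℂ} {a : ℝ} (ha : 0 < a) (hs : 0 < s.im) (hρ : ρ.im ≤ 0) :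
    ‖s - (a : ℂ) * I - ρ‖ < ‖s + (a : ℂ) * I - ρ‖ := by
  have h1 : (s - (a : ℂ) * I - ρ).re = s.re - ρ.re := by simp
  have h2 : (s + (a : ℂ) * I - ρ).re = s.re - ρ.re := by simp
  have h3 : (s - (a : ℂ) * I - ρ).im = s.im - a - ρ.im := by simp
  have h4 : (s + (a : ℂ) * I - ρ).im = s.im + a - ρ.im := by simp
  have hu : 0 < s.im - ρ.im := by linarith
  apply lt_of_pow_lt_pow_left₀ 2 (norm_nonneg _)
  rw [Complex.sq_norm, Complex.sq_norm, Complex.normSq_apply, Complex.normSq_apply,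
    h1, h2, h3, h4]
  nlinarith

private lemma evalA (p : Polynomial ℂ) (hp : p ≠ 0)
    (hr : ∀ z : ℂ, p.eval z = 0 → z.im ≤ 0) (hd : 1 ≤ p.natDegree)
    {s : ℂ} (hs : 0 < s.im) {a : ℝ} (ha : 0 < a) :
    ‖p.eval (s - (a : ℂ) * I)‖ < ‖p.eval (s + (a : ℂ) * I)‖ := by
  have hsplit : p.Splits := IsAlgClosed.splits p
  have hfact := hsplit.eq_prod_roots
  have hcard : p.roots.card = p.natDegree := (Polynomial.splits_iff_card_roots).1 hsplit
  have hroots : ∀ ρ ∈ p.roots, ρ.im ≤ 0 := by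
    intro ρ hρ
    exact hr ρ (Polynomial.isRoot_of_mem_roots hρ)
  have heval : ∀ z : ℂ, ‖p.eval z‖
      = ‖p.leadingCoeff‖ * (p.roots.map (fun ρ => ‖z - ρ‖)).prod := by
    intro z
    conv_lhs => rw [hfact]
    rw [eval_mul, eval_C, norm_mul, Polynomial.eval_multiset_prod]
    congr 1
    change (normHom : ℂ →*₀ ℝ) _ = _
    rw [Multiset.map_map, map_multiset_prod, Multiset.map_map]
    congr 1
    exact Multiset.map_congr rfl (fun ρ _ => by simp)
  rw [heval, heval]
  have hM : p.roots ≠ 0 := by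
    intro h0
    rw [h0] at hcard
    simp at hcard
    omega
  have hlc : 0 < ‖p.leadingCoeff‖ :=
    norm_pos_iff.2 (Polynomial.leadingCoeff_ne_zero.2 hp)
  apply mul_lt_mul_of_pos_left _ hlc
  apply multiset_prod_map_lt _ hM
  intro ρ hρ
  exact ⟨norm_nonneg _, factor_lt ha hs (hroots ρ hρ)⟩

private lemma hasse_top (p : Polynomial ℂ) :
    Polynomial.hasseDeriv p.natDegree p = Polynomial.C p.leadingCoeff := by
  ext n
  rw [Polynomial.hasseDeriv_coeff]
  rcases Nat.eq_zero_or_pos n with rfl | hn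
  · rw [Polynomial.coeff_C, if_pos rfl, zero_add, Nat.choose_self, Nat.cast_one, one_mul]
    rfl
  · rw [Polynomial.coeff_C, if_neg (by omega)]
    rw [Polynomial.coeff_eq_zero_of_natDegree_lt (by omega), mul_zero]

private lemma hasse_sub1 (p : Polynomial ℂ) (hd : 1 ≤ p.natDegree) :
    Polynomial.hasseDeriv (p.natDegree - 1) p
      = Polynomial.C (p.coeff (p.natDegree - 1))
        + Polynomial.C ((p.natDegree : ℂ) * p.leadingCoeff) * Polynomial.X := by
  ext n
  rw [Polynomial.hasseDeriv_coeff]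
  rw [Polynomial.coeff_add, Polynomial.coeff_C, Polynomial.coeff_C_mul, Polynomial.coeff_X]
  match n with
  | 0 => simp
  | 1 =>
    have h1 : 1 + (p.natDegree - 1) = p.natDegree := by omega
    rw [h1, if_neg one_ne_zero, if_pos rfl, zero_add, mul_one]
    have h2 : p.natDegree.choose (p.natDegree - 1) = p.natDegree := by
      rw [Nat.choose_symm hd, Nat.choose_one_right]
    rw [h2]
    rfl
  | (m+2) =>
    rw [Polynomial.coeff_eq_zero_of_natDegree_lt (by omega), mul_zero]
    rw [if_neg (by omega), if_neg (by omega)]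
    simp
private lemma stepLemma (p : Polynomial ℂ) (hp : p ≠ 0)
    (hr : ∀ z : ℂ, p.eval z = 0 → z.im ≤ 0) (hd : 1 ≤ p.natDegree)
    {a : ℝ} (ha : 0 < a) {x : ℂ} (hx : 1 ≤ ‖x‖) :
    ∃ q : Polynomial ℂ,
      (∀ s : ℂ, q.eval s = p.eval (s - (a : ℂ) * I) + x * p.eval (s + (a : ℂ) * I))
      ∧ q ≠ 0 ∧ p.natDegree - 1 ≤ q.natDegree ∧ ∀ z : ℂ, q.eval z = 0 → z.im ≤ 0 := by
  set q : Polynomial ℂ :=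
    Polynomial.taylor (-((a : ℂ) * I)) p + Polynomial.C x * Polynomial.taylor ((a : ℂ) * I) p
    with hq
  have heval : ∀ s : ℂ, q.eval s = p.eval (s - (a : ℂ) * I) + x * p.eval (s + (a : ℂ) * I) := by
    intro s
    rw [hq, Polynomial.eval_add, Polynomial.eval_mul, Polynomial.eval_C,
      Polynomial.taylor_eval, Polynomial.taylor_eval, sub_eq_add_neg]
  have hup : ∀ z : ℂ, 0 < z.im → q.eval z ≠ 0 := by
    intro z hz h0
    rw [heval z] at h0
    have h1 : ‖p.eval (z - (a : ℂ) * I)‖ < ‖p.eval (z + (a : ℂ) * I)‖ :=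
      evalA p hp hr hd hz ha
    have h2 : p.eval (z - (a : ℂ) * I) = -(x * p.eval (z + (a : ℂ) * I)) := by
      linear_combination h0
    have h3 : ‖p.eval (z - (a : ℂ) * I)‖
        = ‖x‖ * ‖p.eval (z + (a : ℂ) * I)‖ := by
      rw [h2, norm_neg, norm_mul]
    nlinarith [norm_nonneg (p.eval (z + (a : ℂ) * I))]
  have hqne : q ≠ 0 := by
    intro h0
    exact hup I (by simp) (by rw [h0, Polynomial.eval_zero])
  refine ⟨q, heval, hqne, ?_, fun z h0 => le_of_not_gt fun hlt => hup z hlt h0⟩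
  have hcd : q.coeff p.natDegree = p.leadingCoeff * (1 + x) := by
    rw [hq, Polynomial.coeff_add, Polynomial.coeff_C_mul, Polynomial.taylor_coeff,
      Polynomial.taylor_coeff, hasse_top, Polynomial.eval_C, Polynomial.eval_C]
    ring
  by_cases hx1 : x = -1
  · apply Polynomial.le_natDegree_of_ne_zero (n := p.natDegree - 1)
    have hcd1 : q.coeff (p.natDegree - 1)
        = p.coeff (p.natDegree - 1) * (1 + x)
          + (p.natDegree : ℂ) * p.leadingCoeff * ((a : ℂ) * I) * (x - 1) := by
      rw [hq, Polynomial.coeff_add, Polynomial.coeff_C_mul, Polynomial.taylor_coeff,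
        Polynomial.taylor_coeff, hasse_sub1 p hd]
      simp only [Polynomial.eval_add, Polynomial.eval_mul, Polynomial.eval_C,
        Polynomial.eval_X]
      ring
    rw [hcd1, hx1]
    have hne : ((p.natDegree : ℂ)) ≠ 0 := Nat.cast_ne_zero.2 (by omega)
    have hane : ((a : ℂ)) ≠ 0 := by
      simpa using ne_of_gt ha
    have hlc : p.leadingCoeff ≠ 0 := Polynomial.leadingCoeff_ne_zero.2 hp
    have hrw : p.coeff (p.natDegree - 1) * (1 + -1)
          + (p.natDegree : ℂ) * p.leadingCoeff * ((a : ℂ) * I) * (-1 - 1)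
        = -2 * ((p.natDegree : ℂ) * (p.leadingCoeff * ((a : ℂ) * I))) := by ring
    rw [hrw]
    exact mul_ne_zero (by norm_num)
      (mul_ne_zero hne (mul_ne_zero hlc (mul_ne_zero hane I_ne_zero)))
  · refine le_trans (Nat.sub_le _ _) (Polynomial.le_natDegree_of_ne_zero ?_)
    rw [hcd]
    refine mul_ne_zero (Polynomial.leadingCoeff_ne_zero.2 hp) ?_
    intro h
    exact hx1 (by linear_combination h)

private lemma split_sum {ι : Type*} [DecidableEq ι] (G' : Polynomial ℂ) (a : ι → ℝ) (x : ι → ℂ)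
    {j : ι} {t : Finset ι} (hj : j ∉ t) (s : ℂ) :
    ∑ S ∈ (insert j t).powerset,
        G'.eval (s - I * (∑ k ∈ insert j t \ S, (a k : ℂ)) + I * (∑ ℓ ∈ S, (a ℓ : ℂ)))
          * ∏ ℓ ∈ S, x ℓ
      = (∑ S ∈ t.powerset,
          G'.eval ((s - (a j : ℂ) * I) - I * (∑ k ∈ t \ S, (a k : ℂ)) + I * (∑ ℓ ∈ S, (a ℓ : ℂ)))
            * ∏ ℓ ∈ S, x ℓ)
        + x j * (∑ S ∈ t.powerset,
          G'.eval ((s + (a j : ℂ) * I) - I * (∑ k ∈ t \ S, (a k : ℂ)) + I * (∑ ℓ ∈ S, (a ℓ : ℂ)))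
            * ∏ ℓ ∈ S, x ℓ) := by
  rw [Finset.sum_powerset_insert hj, Finset.mul_sum]
  congr 1
  · apply Finset.sum_congr rfl
    intro S hS
    have hjS : j ∉ S := fun h => hj (Finset.mem_powerset.1 hS h)
    have h1 : insert j t \ S = insert j (t \ S) := Finset.insert_sdiff_of_notMem t hjS
    have h2 : j ∉ t \ S := fun h => hj (Finset.mem_sdiff.1 h).1
    rw [h1, Finset.sum_insert h2]
    congr 2
    ring
  · apply Finset.sum_congr rfl
    intro S hS
    have hjS : j ∉ S := fun h => hj (Finset.mem_powerset.1 hS h)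
    have h1 : insert j t \ insert j S = t \ S := by
      rw [Finset.insert_sdiff_insert, Finset.sdiff_insert_of_notMem hj]
    rw [h1, Finset.sum_insert hjS, Finset.prod_insert hjS]
    have h3 : s + (a j : ℂ) * I - I * (∑ k ∈ t \ S, (a k : ℂ)) + I * (∑ ℓ ∈ S, (a ℓ : ℂ))
        = s - I * (∑ k ∈ t \ S, (a k : ℂ)) + I * ((a j : ℂ) + ∑ ℓ ∈ S, (a ℓ : ℂ)) := by
      ring
    rw [h3]
    ring
private lemma mainLemma {ι : Type*} [DecidableEq ι] (G' : Polynomial ℂ) (hG : G' ≠ 0)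
    (hroots : ∀ z : ℂ, G'.eval z = 0 → z.im ≤ 0) (a : ι → ℝ) (ha : ∀ k, 0 < a k) (x : ι → ℂ)
    (t : Finset ι) :
    (∀ k ∈ t, 1 ≤ ‖x k‖) → t.card < G'.natDegree →
    ∃ q : Polynomial ℂ,
      (∀ s : ℂ, q.eval s = ∑ S ∈ t.powerset,
        G'.eval (s - I * (∑ k ∈ t \ S, (a k : ℂ)) + I * (∑ ℓ ∈ S, (a ℓ : ℂ))) * ∏ ℓ ∈ S, x ℓ)
      ∧ q ≠ 0 ∧ G'.natDegree - t.card ≤ q.natDegree ∧ ∀ z : ℂ, q.eval z = 0 → z.im ≤ 0 := by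
  induction t using Finset.induction_on with
  | empty =>
    intro _ _
    exact ⟨G', by intro s; simp, hG, by simp, hroots⟩
  | @insert j t hj ih =>
    intro hxs hcard
    rw [Finset.card_insert_of_notMem hj] at hcard
    have hcardt : t.card < G'.natDegree := by omega
    obtain ⟨q, hqe, hqne, hqdeg, hqroots⟩ :=
      ih (fun k hk => hxs k (Finset.mem_insert_of_mem hk)) hcardt
    have hdq : 1 ≤ q.natDegree := by omega
    obtain ⟨q', hq'e, hq'ne, hq'deg, hq'roots⟩ :=
      stepLemma q hqne hqroots hdq (ha j) (hxs j (Finset.mem_insert_self j t))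
    refine ⟨q', ?_, hq'ne, ?_, hq'roots⟩
    · intro s
      rw [split_sum G' a x hj s, hq'e s, hqe, hqe]
    · rw [Finset.card_insert_of_notMem hj]
      omega
theorem Pn_key_proposition_pos (n : ℕ) (G : Polynomial ℝ)
    (hroots : ∀ z : ℂ, (G.map (algebraMap ℝ ℂ)).eval z = 0 → z.im = 0)
    (hdeg : n + 1 ≤ G.natDegree)
    (a : Fin (n + 1) → ℝ) (ha : ∀ k, 0 < a k)
    (A : ℝ) (hA : 0 < A)
    (x : Fin (n + 1) → ℂ)
    (hP : ∑ S : Finset (Fin (n + 1)),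
        (G.map (algebraMap ℝ ℂ)).eval
          (I * A - I * (∑ k ∈ Sᶜ, (a k : ℂ)) + I * (∑ ℓ ∈ S, (a ℓ : ℂ)))
        * ∏ ℓ ∈ S, x ℓ = 0)
    (hx : ∀ k : Fin n, 1 ≤ ‖x k.castSucc‖) :
    ‖x (Fin.last n)‖ < 1 := by
  set G' : Polynomial ℂ := G.map (algebraMap ℝ ℂ) with hG'def
  have hdegG' : G'.natDegree = G.natDegree :=
    Polynomial.natDegree_map_eq_of_injective (algebraMap ℝ ℂ).injective G
  have hG'ne : G' ≠ 0 := by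
    intro h0
    rw [h0] at hdegG'
    simp at hdegG'
    omega
  have hroots' : ∀ z : ℂ, G'.eval z = 0 → z.im ≤ 0 := fun z hz => le_of_eq (hroots z hz)
  set j : Fin (n + 1) := Fin.last n with hjdef
  set t : Finset (Fin (n + 1)) := Finset.univ.erase j with htdef
  have hjt : j ∉ t := Finset.notMem_erase _ _
  have hins : insert j t = Finset.univ := Finset.insert_erase (Finset.mem_univ j)
  have hcardt : t.card = n := by
    rw [htdef, Finset.card_erase_of_mem (Finset.mem_univ j), Finset.card_univ]
    simp
  have hxt : ∀ k ∈ t, 1 ≤ ‖x k‖ := by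
    intro k hk
    have hkne : k ≠ j := Finset.ne_of_mem_erase hk
    obtain ⟨i, rfl⟩ := Fin.eq_castSucc_of_ne_last hkne
    exact hx i
  obtain ⟨q, hqe, hqne, hqdeg, hqroots⟩ :=
    mainLemma G' hG'ne hroots' a ha x t hxt (by omega)
  -- rewrite hP as a powerset sum over univ = insert j t
  have hPP : ∑ S ∈ (insert j t).powerset,
      G'.eval ((I * (A : ℂ)) - I * (∑ k ∈ insert j t \ S, (a k : ℂ))
        + I * (∑ ℓ ∈ S, (a ℓ : ℂ))) * ∏ ℓ ∈ S, x ℓ = 0 := by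
    rw [hins, Finset.powerset_univ]
    rw [← hP]
    apply Finset.sum_congr rfl
    intro S _
    congr 2
  rw [split_sum G' a x hjt, ← hqe, ← hqe] at hPP
  have hdq : 1 ≤ q.natDegree := by omega
  have hsim : (0 : ℝ) < (I * (A : ℂ)).im := by simp [hA]
  have hineq := evalA q hqne hqroots hdq hsim (ha j)
  set α : ℂ := q.eval (I * (A : ℂ) - (a j : ℂ) * I) with hα
  set β : ℂ := q.eval (I * (A : ℂ) + (a j : ℂ) * I) with hβ
  have hβne : (0 : ℝ) < ‖β‖ := lt_of_le_of_lt (norm_nonneg α) hineq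
  have hxβ : x j * β = -α := by linear_combination hPP
  have habs : ‖x j‖ * ‖β‖ = ‖α‖ := by
    rw [← norm_mul, hxβ, norm_neg]
  have hx' : ‖x j‖ = ‖α‖ / ‖β‖ := by
    rw [eq_div_iff (ne_of_gt hβne)]
    exact habs
  rw [hx', div_lt_one hβne]
  exact hineq
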